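/- The exterior derivative d is injective on the image of the Koszul operator κ within polynomial differential forms on ℝ^n: if μ is a polynomial (k+1)-form and d(κμ) = 0, then κμ = 0. -/
import Mathlib


open MvPolynomial

/-- Polynomial differential forms on `ℝ^n`: a family of polynomial coefficients indexed by
subsets `σ ⊆ {1,…,n}`; a `k`-form is supported on sets of cardinality `k`. -/
abbrev PolyForm (n : ℕ) := Finset (Fin n) → MvPolynomial (Fin n) ℝ

/-- The sign `(-1)^{#{j ∈ σ : j < i}}`. -/
noncomputable def sgn {n : ℕ} (σ : Finset (Fin n)) (i : Fin n) : MvPolynomial (Fin n) ℝ :=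
  (-1) ^ (σ.filter (fun j => j < i)).card

/-- The exterior derivative `d`. -/
noncomputable def extD (n : ℕ) : PolyForm n →ₗ[ℝ] PolyForm n where
  toFun ω := fun σ => ∑ i ∈ σ, sgn σ i * pderiv i (ω (σ.erase i))
  map_add' ω η := by
    funext σ
    simp [Pi.add_apply, mul_add, Finset.sum_add_distrib]
  map_smul' c ω := by
    funext σ
    simp [Pi.smul_apply, Finset.smul_sum, mul_smul_comm]

/-- The Koszul operator `κ` (contraction with the position vector field). -/
noncomputable def koszul (n : ℕ) : PolyForm n →ₗ[ℝ] PolyForm n where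
  toFun ω := fun σ => ∑ i ∈ σᶜ, sgn σ i * X i * ω (insert i σ)
  map_add' ω η := by
    funext σ
    simp [Pi.add_apply, mul_add, Finset.sum_add_distrib]
  map_smul' c ω := by
    funext σ
    simp [Pi.smul_apply, Finset.smul_sum, mul_smul_comm]

/-- The space of (polynomial) differential `k`-forms: families supported on index sets of
cardinality `k`. -/
noncomputable def Lambda (n k : ℕ) : Submodule ℝ (PolyForm n) where
  carrier := {ω | ∀ σ, σ.card ≠ k → ω σ = 0}
  zero_mem' := fun σ _ => rfl
  add_mem' := fun ha hb σ h => by simp only [Pi.add_apply, ha σ h, hb σ h, add_zero]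
  smul_mem' := fun c ω h σ hσ => by simp only [Pi.smul_apply, h σ hσ, smul_zero]

/-- The form monomial `x^α dx_σ`. -/
noncomputable def formMonomial {n : ℕ} (α : Fin n →₀ ℕ) (σ : Finset (Fin n)) : PolyForm n :=
  fun τ => if τ = σ then monomial α 1 else 0

/-- The (total) degree `|α|` of a multi-index. -/
def mdeg {n : ℕ} (α : Fin n →₀ ℕ) : ℕ := α.sum fun _ m => m

/-- The linear degree of the form monomial `x^α dx_σ`: the number of `i ∉ σ` with `α i = 1`. -/
def ldeg {n : ℕ} (α : Fin n →₀ ℕ) (σ : Finset (Fin n)) : ℕ :=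
  ((σᶜ).filter fun i => α i = 1).card

/-- `H_rΛ^k(ℝ^n)`: `k`-forms with homogeneous degree-`r` polynomial coefficients. -/
noncomputable def Hspace (n r k : ℕ) : Submodule ℝ (PolyForm n) :=
  Submodule.span ℝ {ω | ∃ α σ, σ.card = k ∧ mdeg α = r ∧ ω = formMonomial α σ}

/-- `P_rΛ^k(ℝ^n)`: `k`-forms with polynomial coefficients of degree at most `r`. -/
noncomputable def Pspace (n r k : ℕ) : Submodule ℝ (PolyForm n) :=
  Submodule.span ℝ {ω | ∃ α σ, σ.card = k ∧ mdeg α ≤ r ∧ ω = formMonomial α σ}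

/-- `H_{r,l}Λ^k(ℝ^n)`: homogeneous degree-`r` `k`-forms of linear degree at least `l`. -/
noncomputable def Hl (n r l k : ℕ) : Submodule ℝ (PolyForm n) :=
  Submodule.span ℝ
    {ω | ∃ α σ, σ.card = k ∧ mdeg α = r ∧ l ≤ ldeg α σ ∧ ω = formMonomial α σ}

/-- `J_rΛ^k(ℝ^n) := Σ_{l ≥ 1} κ H_{r+l-1, l}Λ^{k+1}(ℝ^n)` (here `l` is reindexed as `l+1`). -/
noncomputable def Jspace (n r k : ℕ) : Submodule ℝ (PolyForm n) :=
  ⨆ l : ℕ, Submodule.map (koszul n) (Hl n (r + l) (l + 1) (k + 1))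

/-- The trimmed polynomial space `P_r^-Λ^k := P_{r-1}Λ^k ⊕ κ H_{r-1}Λ^{k+1}`. -/
noncomputable def PminusSpace (n r k : ℕ) : Submodule ℝ (PolyForm n) :=
  Pspace n (r - 1) k ⊔ Submodule.map (koszul n) (Hspace n (r - 1) (k + 1))

/-- The serendipity space `S_rΛ^k := P_rΛ^k + J_rΛ^k + d J_{r+1}Λ^{k-1}`
(the last summand being absent for `k = 0`). -/
noncomputable def Sspace (n r k : ℕ) : Submodule ℝ (PolyForm n) :=
  Pspace n r k ⊔ Jspace n r k ⊔
    (if k = 0 then ⊥ else Submodule.map (extD n) (Jspace n (r + 1) (k - 1)))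

/-- The trimmed serendipity space `S_r^-Λ^k := S_{r-1}Λ^k + κ S_{r-1}Λ^{k+1}`. -/
noncomputable def SminusSpace (n r k : ℕ) : Submodule ℝ (PolyForm n) :=
  Sspace n (r - 1) k ⊔ Submodule.map (koszul n) (Sspace n (r - 1) (k + 1))

section Helpers
open Finset

variable {n : ℕ}

lemma sgn_eq_C (σ : Finset (Fin n)) (i : Fin n) :
    sgn σ i = C ((-1 : ℝ) ^ (σ.filter (fun j => j < i)).card) := by
  rw [sgn, map_pow, map_neg, map_one]

lemma sgn_sq (σ : Finset (Fin n)) (i : Fin n) : sgn σ i * sgn σ i = 1 := by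
  rw [sgn, ← pow_add, ← two_mul, pow_mul]
  norm_num

lemma pderiv_sgn_mul (σ : Finset (Fin n)) (i j : Fin n) (p : MvPolynomial (Fin n) ℝ) :
    pderiv j (sgn σ i * p) = sgn σ i * pderiv j p := by
  rw [sgn_eq_C, pderiv_C_mul]

lemma sgn_insert {σ : Finset (Fin n)} {i : Fin n} (hi : i ∉ σ) (j : Fin n) :
    sgn (insert i σ) j = (if i < j then -1 else 1) * sgn σ j := by
  unfold sgn
  rw [Finset.filter_insert]
  split_ifs with h
  · rw [Finset.card_insert_of_notMem (fun hmem => hi (Finset.mem_filter.mp hmem).1), pow_succ]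
    ring
  · ring

lemma sgn_insert_self {σ : Finset (Fin n)} {i : Fin n} (hi : i ∉ σ) :
    sgn (insert i σ) i = sgn σ i := by
  rw [sgn_insert hi, if_neg (lt_irrefl i), one_mul]

lemma sgn_erase_self (σ : Finset (Fin n)) (i : Fin n) : sgn (σ.erase i) i = sgn σ i := by
  unfold sgn
  rw [Finset.filter_erase, Finset.erase_eq_of_notMem]
  intro hmem
  exact lt_irrefl i (Finset.mem_filter.mp hmem).2

lemma sgn_antisym {τ : Finset (Fin n)} {i j : Fin n} (hi : i ∉ τ) (hj : j ∉ τ) (hij : i ≠ j) :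
    sgn τ i * sgn (insert i τ) j = -(sgn τ j * sgn (insert j τ) i) := by
  rw [sgn_insert hi j, sgn_insert hj i]
  rcases lt_or_gt_of_ne hij with h | h
  · rw [if_pos h, if_neg (not_lt.mpr h.le)]; ring
  · rw [if_neg (not_lt.mpr h.le), if_pos h]; ring

end Helpers
section KK
open Finset
variable {n : ℕ}

lemma koszul_apply (ω : PolyForm n) (σ : Finset (Fin n)) :
    koszul n ω σ = ∑ i ∈ σᶜ, sgn σ i * X i * ω (insert i σ) := rfl

lemma extD_apply (ω : PolyForm n) (σ : Finset (Fin n)) :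
    extD n ω σ = ∑ i ∈ σ, sgn σ i * pderiv i (ω (σ.erase i)) := rfl

lemma koszul_koszul (ω : PolyForm n) : koszul n (koszul n ω) = 0 := by
  funext σ
  rw [koszul_apply]
  simp only [koszul_apply, Finset.mul_sum]
  set f : Fin n → Fin n → MvPolynomial (Fin n) ℝ := fun i j =>
    sgn σ i * X i * (sgn (insert i σ) j * X j * ω (insert j (insert i σ))) with hf
  set g : Fin n → Fin n → MvPolynomial (Fin n) ℝ := fun i j =>
    if i = j then 0 else f i j with hg
  have h1 : ∑ i ∈ σᶜ, ∑ j ∈ (insert i σ)ᶜ, f i j = ∑ i ∈ σᶜ, ∑ j ∈ σᶜ, g i j := by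
    refine Finset.sum_congr rfl fun i hi => ?_
    rw [Finset.compl_insert]
    rw [show ∑ j ∈ σᶜ.erase i, f i j = ∑ j ∈ σᶜ.erase i, g i j from
      Finset.sum_congr rfl fun j hj => by
        show f i j = if i = j then 0 else f i j
        rw [if_neg fun h => Finset.ne_of_mem_erase hj h.symm]]
    have h0 : g i i = 0 := by
      show (if i = i then 0 else f i i) = 0
      rw [if_pos rfl]
    exact Finset.sum_erase σᶜ h0
  have hanti : ∀ i ∈ σᶜ, ∀ j ∈ σᶜ, g j i = -g i j := by
    intro i hi j hj
    by_cases hij : i = j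
    · subst hij
      show (if i = i then 0 else f i i) = -(if i = i then 0 else f i i)
      rw [if_pos rfl]; ring
    · show (if j = i then 0 else f j i) = -(if i = j then 0 else f i j)
      rw [if_neg (Ne.symm hij), if_neg hij, hf]
      beta_reduce
      have h := sgn_antisym (Finset.mem_compl.mp hi) (Finset.mem_compl.mp hj) hij
      rw [Finset.insert_comm j i σ]
      linear_combination (X i * X j * ω (insert i (insert j σ))) * h
  have h2 : ∑ i ∈ σᶜ, ∑ j ∈ σᶜ, g i j = -∑ i ∈ σᶜ, ∑ j ∈ σᶜ, g i j := by
    conv_lhs => rw [Finset.sum_comm]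
    rw [← Finset.sum_neg_distrib]
    refine Finset.sum_congr rfl fun i hi => ?_
    rw [← Finset.sum_neg_distrib]
    exact Finset.sum_congr rfl fun j hj => hanti i hi j hj
  have h3 : ∑ i ∈ σᶜ, ∑ j ∈ σᶜ, g i j = 0 := by
    have h4 : (2 : MvPolynomial (Fin n) ℝ) * (∑ i ∈ σᶜ, ∑ j ∈ σᶜ, g i j) = 0 := by
      linear_combination h2
    exact (mul_eq_zero.mp h4).resolve_left two_ne_zero
  rw [h1, h3]
  rfl
end KK
section Euler
open Finset
variable {n : ℕ}

lemma X_mul_pderiv_monomial (i : Fin n) (β : Fin n →₀ ℕ) (a : ℝ) :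
    X i * pderiv i (monomial β a) = monomial β ((β i : ℝ) * a) := by
  rw [pderiv_monomial]
  by_cases h : β i = 0
  · simp [h]
  · have hβ : Finsupp.single i 1 + (β - Finsupp.single i 1) = β := by
      ext j
      simp only [Finsupp.add_apply, Finsupp.tsub_apply, Finsupp.single_apply]
      by_cases hj : i = j
      · subst hj; simp; omega
      · simp [hj]
    rw [X, monomial_mul, hβ, one_mul, mul_comm]

lemma coeff_X_mul_pderiv (α : Fin n →₀ ℕ) (i : Fin n) (p : MvPolynomial (Fin n) ℝ) :
    coeff α (X i * pderiv i p) = (α i : ℝ) * coeff α p := by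
  have key : ∀ β ∈ p.support, coeff α (X i * pderiv i (monomial β (coeff β p)))
      = (α i : ℝ) * coeff α (monomial β (coeff β p)) := by
    intro β _
    rw [X_mul_pderiv_monomial, coeff_monomial, coeff_monomial]
    split_ifs with h
    · rw [h]
    · rw [mul_zero]
  conv_lhs => rw [p.as_sum, map_sum (pderiv i), Finset.mul_sum]
  rw [coeff_sum, Finset.sum_congr rfl key, ← Finset.mul_sum, ← coeff_sum, ← p.as_sum]

lemma euler_coeff (α : Fin n →₀ ℕ) (p : MvPolynomial (Fin n) ℝ) :
    coeff α (∑ i, X i * pderiv i p) = ((∑ i, α i : ℕ) : ℝ) * coeff α p := by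
  rw [coeff_sum, Finset.sum_congr rfl fun i _ => coeff_X_mul_pderiv α i p, ← Finset.sum_mul]
  push_cast
  rfl

lemma eq_zero_of_euler (p : MvPolynomial (Fin n) ℝ) (c : ℕ)
    (h : (∑ i, X i * pderiv i p) + (c : MvPolynomial (Fin n) ℝ) * p = 0)
    (h0 : coeff 0 p = 0) : p = 0 := by
  ext α
  by_cases hα : α = 0
  · rw [hα, h0, coeff_zero]
  · have hc := congrArg (coeff α) h
    rw [coeff_add, coeff_zero, euler_coeff] at hc
    have hcc : coeff α ((c : MvPolynomial (Fin n) ℝ) * p) = (c : ℝ) * coeff α p := by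
      rw [show ((c : MvPolynomial (Fin n) ℝ)) = C (c : ℝ) by push_cast; rfl, coeff_C_mul]
    rw [hcc, ← add_mul] at hc
    have hpos : (0 : ℝ) < ((∑ i, α i : ℕ) : ℝ) + (c : ℝ) := by
      have : 0 < ∑ i, α i := by
        obtain ⟨j, hj⟩ : ∃ j, α j ≠ 0 := by
          by_contra hno
          push_neg at hno
          exact hα (Finsupp.ext hno)
        exact Finset.sum_pos' (fun i _ => Nat.zero_le _) ⟨j, Finset.mem_univ j, Nat.pos_of_ne_zero hj⟩
      have h1 : (0:ℝ) < ((∑ i, α i : ℕ) : ℝ) := by exact_mod_cast this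
      have h2 : (0:ℝ) ≤ (c : ℝ) := Nat.cast_nonneg c
      linarith
    rw [coeff_zero]
    exact (mul_eq_zero.mp hc).resolve_left (ne_of_gt hpos)

end Euler
section Cartan
open Finset
variable {n : ℕ}

lemma sgn_cross {σ : Finset (Fin n)} {i j : Fin n} (hi : i ∈ σ) (hj : j ∉ σ) :
    sgn σ i * sgn (σ.erase i) j = -(sgn σ j * sgn (insert j σ) i) := by
  have hij : i ≠ j := fun h => hj (h ▸ hi)
  have hiτ : i ∉ σ.erase i := Finset.notMem_erase i σ
  have hjτ : j ∉ σ.erase i := fun h => hj (Finset.mem_of_mem_erase h)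
  have h := sgn_antisym hiτ hjτ hij
  rw [Finset.insert_erase hi, sgn_erase_self] at h
  have hins : sgn (insert j (σ.erase i)) i = sgn (insert j σ) i := by
    have : insert j σ = insert i (insert j (σ.erase i)) := by
      rw [Finset.insert_comm, Finset.insert_erase hi]
    rw [this, sgn_insert_self (by
      simp only [Finset.mem_insert, not_or]
      exact ⟨hij, hiτ⟩)]
  rw [hins] at h
  -- h : sgn σ i * sgn σ j = -(sgn (σ.erase i) j * sgn (insert j σ) i)
  have hsq1 : sgn σ j * sgn σ j = 1 := sgn_sq σ j
  have hsq2 : sgn (σ.erase i) j * sgn (σ.erase i) j = 1 := sgn_sq _ j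
  linear_combination (sgn σ j * sgn (σ.erase i) j) * h
    - (sgn σ i * sgn (σ.erase i) j) * hsq1 - (sgn σ j * sgn (insert j σ) i) * hsq2

lemma cartan (ω : PolyForm n) (σ : Finset (Fin n)) :
    extD n (koszul n ω) σ + koszul n (extD n ω) σ =
      (∑ i, X i * pderiv i (ω σ)) + (σ.card : MvPolynomial (Fin n) ℝ) * ω σ := by
  set t : Fin n → Fin n → MvPolynomial (Fin n) ℝ := fun i j =>
    sgn σ i * sgn (σ.erase i) j * (X j * pderiv i (ω (insert j (σ.erase i)))) with ht
  have hA : ∀ i ∈ σ, sgn σ i * pderiv i (koszul n ω (σ.erase i)) =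
      (ω σ + X i * pderiv i (ω σ)) + ∑ j ∈ σᶜ, t i j := by
    intro i hi
    rw [koszul_apply, Finset.compl_erase,
      Finset.sum_insert (by simp [hi]), sgn_erase_self, Finset.insert_erase hi,
      map_add, map_sum]
    have d1 : pderiv i (sgn σ i * X i * ω σ) = sgn σ i * (ω σ + X i * pderiv i (ω σ)) := by
      rw [mul_assoc, pderiv_sgn_mul, pderiv_mul, pderiv_X_self]; ring
    have d2 : ∀ j ∈ σᶜ, pderiv i (sgn (σ.erase i) j * X j * ω (insert j (σ.erase i)))
        = sgn (σ.erase i) j * (X j * pderiv i (ω (insert j (σ.erase i)))) := by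
      intro j hj
      have hij : j ≠ i := fun h => (Finset.mem_compl.mp hj) (h ▸ hi)
      rw [mul_assoc, pderiv_sgn_mul, pderiv_mul, pderiv_X_of_ne hij]; ring
    rw [d1, Finset.sum_congr rfl d2, mul_add, ← mul_assoc, sgn_sq, one_mul, Finset.mul_sum]
    congr 1
    exact Finset.sum_congr rfl fun j hj => by rw [ht]; ring
  have hB : ∀ j ∈ σᶜ, sgn σ j * X j * extD n ω (insert j σ) =
      X j * pderiv j (ω σ) - ∑ i ∈ σ, t i j := by
    intro j hj
    have hjs : j ∉ σ := Finset.mem_compl.mp hj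
    rw [extD_apply, Finset.sum_insert hjs, sgn_insert_self hjs, Finset.erase_insert hjs]
    have e1 : ∀ i ∈ σ, sgn (insert j σ) i * pderiv i (ω ((insert j σ).erase i))
        = sgn (insert j σ) i * pderiv i (ω (insert j (σ.erase i))) := by
      intro i hi
      have hij : j ≠ i := fun h => hjs (h ▸ hi)
      rw [Finset.erase_insert_of_ne hij]
    rw [Finset.sum_congr rfl e1, mul_add, Finset.mul_sum, sub_eq_add_neg]
    congr 1
    · linear_combination (X j * pderiv j (ω σ)) * sgn_sq σ j
    · rw [← Finset.sum_neg_distrib]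
      refine Finset.sum_congr rfl fun i hi => ?_
      have hcross := sgn_cross hi hjs
      rw [ht]
      beta_reduce
      linear_combination (X j * pderiv i (ω (insert j (σ.erase i)))) * hcross
  rw [extD_apply, koszul_apply, Finset.sum_congr rfl hA, Finset.sum_congr rfl hB]
  rw [Finset.sum_add_distrib, Finset.sum_add_distrib, Finset.sum_sub_distrib]
  rw [Finset.sum_comm (s := σ) (t := σᶜ) (f := fun i j => t i j)]
  rw [Finset.sum_const, nsmul_eq_mul]
  rw [← Finset.sum_add_sum_compl σ (fun i => X i * pderiv i (ω σ))]
  ring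
end Cartan

/-- `d` is injective on the image of `κ`: if `μ` is a polynomial
`(k+1)`-form and `d(κμ) = 0`, then `κμ = 0`. -/
theorem extD_injective_on_koszul_image (n k : ℕ) (μ : PolyForm n) (hμ : μ ∈ Lambda n (k + 1))
    (h : extD n (koszul n μ) = 0) :
    koszul n μ = 0 := by
  have hkk : koszul n (koszul n μ) = 0 := koszul_koszul μ
  have hcart : ∀ σ : Finset (Fin n),
      (∑ i, X i * pderiv i (koszul n μ σ)) +
        ((σ.card : ℕ) : MvPolynomial (Fin n) ℝ) * koszul n μ σ = 0 := by
    intro σ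
    have hc := cartan (koszul n μ) σ
    rw [hkk, h, map_zero] at hc
    simpa using hc.symm
  funext σ
  have h0 : coeff 0 (koszul n μ σ) = 0 := by
    rw [koszul_apply, coeff_sum]
    refine Finset.sum_eq_zero fun i _ => ?_
    have hc : constantCoeff (sgn σ i * X i * μ (insert i σ)) = 0 := by
      rw [map_mul, map_mul, constantCoeff_X, mul_zero, zero_mul]
    exact hc
  show koszul n μ σ = 0
  exact eq_zero_of_euler (koszul n μ σ) σ.card (hcart σ) h0
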